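/- Let d ≥ 1 and let v ∈ ℝ^d with 0 < ‖v‖ < 1. Then the matrix D(v) − v ⊗ v is positive semidefinite: for every w ∈ ℝ^d, ⟨w, D(v)w⟩ − ⟨v, w⟩² ≥ 0. (Equivalently, for a realizable state (ψ⁰, ψ¹) with v = ψ¹/ψ⁰, the reconstructed second moment ψ² = D(v)ψ⁰ satisfies ψ² − (ψ¹ ⊗ ψ¹)/ψ⁰ ⪰ 0.) -/

import Mathlib

/-- The Eddington factor `χ(f) = (3 + 4f²)/(5 + 2√(4 − 3f²))` of the M₁ closure. -/
noncomputable def eddingtonFactor (f : ℝ) : ℝ :=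
  (3 + 4 * f ^ 2) / (5 + 2 * Real.sqrt (4 - 3 * f ^ 2))

/-- The Eddington tensor
`D(v) = ((1 − χ(‖v‖))/2) I_d + ((3χ(‖v‖) − 1)/2) (v ⊗ v)/‖v‖²`
as a `d × d` real matrix, for `v ∈ ℝ^d = EuclideanSpace ℝ (Fin d)`. -/
noncomputable def eddingtonTensor (d : ℕ) (v : EuclideanSpace ℝ (Fin d)) :
    Matrix (Fin d) (Fin d) ℝ :=
  ((1 - eddingtonFactor ‖v‖) / 2) • (1 : Matrix (Fin d) (Fin d) ℝ) +
    ((3 * eddingtonFactor ‖v‖ - 1) / 2 / ‖v‖ ^ 2) • Matrix.of (fun i j => v i * v j)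

lemma eddington_sq_le (f : ℝ) (hf0 : 0 ≤ f) (hf1 : f ≤ 1) :
    f ^ 2 ≤ eddingtonFactor f := by
  have h4 : (1 : ℝ) ≤ 4 - 3 * f ^ 2 := by nlinarith
  set s := Real.sqrt (4 - 3 * f ^ 2) with hs
  have hs1 : 1 ≤ s := by
    rw [hs]; rw [show (1:ℝ) = Real.sqrt 1 from (Real.sqrt_one).symm]
    exact Real.sqrt_le_sqrt h4
  have hssq : s ^ 2 = 4 - 3 * f ^ 2 := Real.sq_sqrt (by linarith)
  have hden : 0 < 5 + 2 * s := by linarith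
  rw [eddingtonFactor, le_div_iff₀ hden]
  nlinarith [sq_nonneg (s - 1), hssq, hs1]

lemma eddington_le_one (f : ℝ) (hf0 : 0 ≤ f) (hf1 : f ≤ 1) :
    eddingtonFactor f ≤ 1 := by
  have h4 : (1 : ℝ) ≤ 4 - 3 * f ^ 2 := by nlinarith
  set s := Real.sqrt (4 - 3 * f ^ 2) with hs
  have hs1 : 1 ≤ s := by
    rw [hs]; rw [show (1:ℝ) = Real.sqrt 1 from (Real.sqrt_one).symm]
    exact Real.sqrt_le_sqrt h4
  have hden : 0 < 5 + 2 * s := by linarith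
  rw [eddingtonFactor, div_le_one hden]
  nlinarith

lemma quadForm_eq (d : ℕ) (v w : EuclideanSpace ℝ (Fin d)) (c1 c2 : ℝ)
    (M : Matrix (Fin d) (Fin d) ℝ)
    (hM : M = c1 • (1 : Matrix (Fin d) (Fin d) ℝ) + c2 • Matrix.of (fun i j => v i * v j)) :
    inner (𝕜 := ℝ) w ((WithLp.toLp 2 (M.mulVec w) : EuclideanSpace ℝ (Fin d)))
      = c1 * (∑ i, w i * w i) + c2 * ((∑ i, v i * w i) * (∑ i, v i * w i)) := by
  subst hM
  simp only [PiLp.inner_apply, RCLike.inner_apply, conj_trivial, Matrix.mulVec,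
    dotProduct, PiLp.toLp_apply, Matrix.add_apply, Matrix.smul_apply, Matrix.one_apply,
    Matrix.of_apply, smul_eq_mul, add_mul, mul_ite, ite_mul, mul_one, mul_zero, zero_mul,
    Finset.sum_add_distrib, Finset.sum_ite_eq, Finset.mem_univ, if_true, mul_add]
  rw [Finset.sum_mul_sum, Finset.mul_sum, Finset.mul_sum]
  congr 1
  · exact Finset.sum_congr rfl fun i _ => by ring
  · refine Finset.sum_congr rfl fun i _ => ?_
    rw [Finset.sum_mul, Finset.mul_sum]
    exact Finset.sum_congr rfl fun j _ => by ring

/-- For `0 < ‖v‖ < 1`, the matrix `D(v) − v ⊗ v` is positive semidefinite: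
`⟨w, D(v)w⟩ − ⟨v, w⟩² ≥ 0` for every `w ∈ ℝ^d`. -/
theorem eddingtonTensor_sub_outer_posSemidef (d : ℕ) (hd : 1 ≤ d)
    (v : EuclideanSpace ℝ (Fin d)) (hv0 : 0 < ‖v‖) (hv1 : ‖v‖ < 1) :
    ∀ w : EuclideanSpace ℝ (Fin d),
      0 ≤ inner (𝕜 := ℝ) w (WithLp.toLp 2 ((eddingtonTensor d v).mulVec w) : EuclideanSpace ℝ (Fin d)) -
            (inner (𝕜 := ℝ) v w) ^ 2 := by
  intro w
  set χ := eddingtonFactor ‖v‖ with hχ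
  have hf2 : ‖v‖ ^ 2 ≤ χ := eddington_sq_le ‖v‖ (norm_nonneg v) hv1.le
  have hχ1 : χ ≤ 1 := eddington_le_one ‖v‖ (norm_nonneg v) hv1.le
  have hkey := quadForm_eq d v w ((1 - χ) / 2) ((3 * χ - 1) / 2 / ‖v‖ ^ 2)
    (eddingtonTensor d v) rfl
  have hvw : inner (𝕜 := ℝ) v w = ∑ i, v i * w i := by
    simp [PiLp.inner_apply, RCLike.inner_apply]
    exact Finset.sum_congr rfl fun i _ => mul_comm _ _
  have hww : ∑ i, w i * w i = ‖w‖ ^ 2 := by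
    rw [← real_inner_self_eq_norm_sq w]
    simp only [PiLp.inner_apply, RCLike.inner_apply, conj_trivial]
  rw [hkey, hww, ← hvw]
  set P := inner (𝕜 := ℝ) v w with hP
  have hCS : P ^ 2 ≤ ‖v‖ ^ 2 * ‖w‖ ^ 2 := by
    have := abs_real_inner_le_norm v w
    nlinarith [abs_nonneg P, sq_abs P, this]
  have hv2 : 0 < ‖v‖ ^ 2 := by positivity
  have hW : 0 ≤ ‖w‖ ^ 2 := sq_nonneg _
  have expand : (1 - χ) / 2 * ‖w‖ ^ 2 + (3 * χ - 1) / 2 / ‖v‖ ^ 2 * (P * P) - P ^ 2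
      = ((1 - χ) * (‖v‖ ^ 2 * ‖w‖ ^ 2 - P ^ 2) + 2 * (χ - ‖v‖ ^ 2) * P ^ 2)
        / (2 * ‖v‖ ^ 2) := by
    field_simp
    ring
  rw [expand]
  apply div_nonneg _ (by positivity)
  nlinarith [sq_nonneg P, hCS, hf2, hχ1]
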